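/- For any two pure states ρ = |ψ⟩⟨ψ| and ω = |φ⟩⟨φ| on ℂ^{2^n}, the squared symmetric quantum Wasserstein distance equals D²(ρ,ω) = 2^{2n+1} - 2^{n+1}|⟨ψ,φ⟩|²; in particular D²(ρ,ω) ≤ 2^{2n+1} with equality iff ψ ⊥ φ, and D²(ρ,ρ) = 2^{2n+1} - 2^{n+1} > 0. -/

import Mathlib

open Matrix Kronecker
open scoped ComplexOrder

noncomputable def Pauli (m : Fin 4) : Matrix (Fin 2) (Fin 2) ℂ :=
  if m = 0 then 1
  else if m = 1 then !![0, 1; 1, 0]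
  else if m = 2 then !![0, -Complex.I; Complex.I, 0]
  else !![1, 0; 0, -1]

noncomputable def PauliProd (n : ℕ) (m : Fin n → Fin 4) :
    Matrix (Fin n → Fin 2) (Fin n → Fin 2) ℂ :=
  fun k l => ∏ i, Pauli (m i) (k i) (l i)

def pauliJ (m m' : Fin 4) : ℂ := if m = 0 ∨ m' = 0 ∨ m = m' then 1 else -1

def vecify {d : Type*} (A : Matrix d d ℂ) : d × d → ℂ := fun p => A p.1 p.2

noncomputable def vecProj {d : Type*} (A : Matrix d d ℂ) : Matrix (d × d) (d × d) ℂ :=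
  fun p q => vecify A p * star (vecify A q)

noncomputable def ptrace2 {d : Type*} [Fintype d] (P : Matrix (d × d) (d × d) ℂ) :
    Matrix d d ℂ := fun i j => ∑ k, P (i, k) (j, k)

noncomputable def ptrace1 {d : Type*} [Fintype d] (P : Matrix (d × d) (d × d) ℂ) :
    Matrix d d ℂ := fun i j => ∑ k, P (k, i) (k, j)

/-- Uniqueness of the coupling between two pure states: any PSD matrix with the
given pure marginals has product form. -/
lemma coupling_entries {d : Type*} [Fintype d] [DecidableEq d]
    (ψ φ : d → ℂ) (hφ : star φ ⬝ᵥ φ = 1)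
    (P : Matrix (d × d) (d × d) ℂ) (hP : P.PosSemidef)
    (h2 : ptrace2 P = vecMulVec φ (star φ))
    (h1 : ptrace1 P = (vecMulVec ψ (star ψ))ᵀ) :
    ∀ i k j l, P (i,k) (j,l) = φ i * star (φ j) * ψ l * star (ψ k) := by
  have hher : ∀ p q, P p q = star (P q p) := by
    intro p q
    conv_lhs => rw [← hP.1]
    rfl
  -- Step A: P kills vectors c ⊗ e_k with c ⊥ φ
  have hkill : ∀ (c : d → ℂ), star φ ⬝ᵥ c = 0 →
      ∀ (l : d) (p : d × d), ∑ a, P p (a, l) * c a = 0 := by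
    intro c hc l p
    set x : d → (d × d → ℂ) := fun k => (fun q => c q.1 * (if q.2 = k then 1 else 0)) with hx
    have hquad : ∀ k, star (x k) ⬝ᵥ P *ᵥ (x k) =
        ∑ i, ∑ j, star (c i) * P (i, k) (j, k) * c j := by
      intro k
      simp only [dotProduct, Matrix.mulVec, hx, Fintype.sum_prod_type, Pi.star_apply,
        star_mul', mul_ite, mul_one, mul_zero, ite_mul, zero_mul,
        apply_ite (star : ℂ → ℂ), star_one,
        star_zero, Finset.sum_ite_eq', Finset.mem_univ, if_true]
      refine Finset.sum_congr rfl fun i _ => ?_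
      rw [Finset.mul_sum]
      refine Finset.sum_congr rfl fun j _ => ?_
      ring
    have hsum : ∑ k, star (x k) ⬝ᵥ P *ᵥ (x k) = 0 := by
      have h' : ∑ k, star (x k) ⬝ᵥ P *ᵥ (x k)
          = ∑ i, ∑ j, star (c i) * (ptrace2 P i j) * c j := by
        simp only [hquad, ptrace2, Finset.mul_sum, Finset.sum_mul]
        rw [Finset.sum_comm]
        refine Finset.sum_congr rfl fun i _ => ?_
        rw [Finset.sum_comm]
      rw [h', h2]
      have h'' : ∑ i, ∑ j, star (c i) * (vecMulVec φ (star φ)) i j * c j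
          = (∑ i, star (c i) * φ i) * (∑ j, star (φ j) * c j) := by
        rw [Finset.sum_mul_sum]
        refine Finset.sum_congr rfl fun i _ => ?_
        refine Finset.sum_congr rfl fun j _ => ?_
        simp [vecMulVec_apply]
        ring
      rw [h'']
      have h0 : (∑ j, star (φ j) * c j) = 0 := hc
      rw [h0, mul_zero]
    have hnn : ∀ k, 0 ≤ star (x k) ⬝ᵥ P *ᵥ (x k) := fun k => hP.dotProduct_mulVec_nonneg (x k)
    have hzero : ∀ k ∈ Finset.univ, star (x k) ⬝ᵥ P *ᵥ (x k) = 0 :=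
      (Finset.sum_eq_zero_iff_of_nonneg (fun k _ => hnn k)).mp hsum
    have hmv : P *ᵥ (x l) = 0 := (hP.dotProduct_mulVec_zero_iff (x l)).mp
      (hzero l (Finset.mem_univ l))
    have hthis := congrFun hmv p
    simp only [Matrix.mulVec, dotProduct, hx, Fintype.sum_prod_type, mul_ite, mul_one,
      mul_zero, Finset.sum_ite_eq', Finset.mem_univ, if_true, Pi.zero_apply] at hthis
    rw [← hthis]
  -- Step B: structure of P
  have hstar1 : ∀ (p : d × d) (j l : d),
      P p (j, l) = star (φ j) * ∑ a, φ a * P p (a, l) := by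
    intro p j l
    have hc : star φ ⬝ᵥ (fun a => (if a = j then 1 else 0) - star (φ j) * φ a) = 0 := by
      have : star φ ⬝ᵥ (fun a => (if a = j then 1 else 0) - star (φ j) * φ a)
          = star (φ j) - star (φ j) * (star φ ⬝ᵥ φ) := by
        simp only [dotProduct, Pi.star_apply, mul_sub, Finset.sum_sub_distrib, mul_ite,
          mul_one, mul_zero, Finset.sum_ite_eq', Finset.mem_univ, if_true, Finset.mul_sum]
        congr 1
        refine Finset.sum_congr rfl fun a _ => ?_
        ring
      rw [this, hφ, mul_one, sub_self]
    have hk := hkill _ hc l p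
    have hexp : ∑ a, P p (a, l) * ((if a = j then 1 else 0) - star (φ j) * φ a)
        = P p (j, l) - star (φ j) * ∑ a, φ a * P p (a, l) := by
      simp only [mul_sub, Finset.sum_sub_distrib, mul_ite, mul_one, mul_zero,
        Finset.sum_ite_eq', Finset.mem_univ, if_true, Finset.mul_sum]
      congr 1
      refine Finset.sum_congr rfl fun a _ => ?_
      ring
    rw [hexp] at hk
    linear_combination hk
  have hstar2 : ∀ (q : d × d) (i k : d),
      P (i, k) q = φ i * ∑ a, star (φ a) * P (a, k) q := by
    intro q i k
    rw [hher (i, k) q, hstar1 q i k, star_mul', star_star, star_sum, Finset.mul_sum,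
      Finset.mul_sum]
    refine Finset.sum_congr rfl fun a _ => ?_
    rw [star_mul', ← hher]
  set T : d → d → ℂ := fun k l => ∑ a, ∑ b, φ a * star (φ b) * P (b, k) (a, l) with hT
  have hPT : ∀ i k j l, P (i, k) (j, l) = φ i * star (φ j) * T k l := by
    intro i k j l
    rw [hstar1 (i, k) j l]
    have : ∀ a, φ a * P (i, k) (a, l) = φ a * (φ i * ∑ b, star (φ b) * P (b, k) (a, l)) := by
      intro a; rw [← hstar2 (a, l) i k]
    rw [Finset.sum_congr rfl fun a _ => this a, hT]
    simp only [Finset.mul_sum]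
    refine Finset.sum_congr rfl fun a _ => Finset.sum_congr rfl fun b _ => ?_
    ring
  have hTval : ∀ i j, T i j = ψ j * star (ψ i) := by
    intro i j
    have h := congrFun (congrFun h1 i) j
    simp only [ptrace1] at h
    rw [Finset.sum_congr rfl fun a _ => hPT a i a j] at h
    have : ∑ a, φ a * star (φ a) * T i j = (star φ ⬝ᵥ φ) * T i j := by
      rw [dotProduct, Finset.sum_mul]
      refine Finset.sum_congr rfl fun a _ => ?_
      simp only [Pi.star_apply]; ring
    rw [this, hφ, one_mul] at h
    rw [h]
    simp [vecMulVec_apply, transpose_apply]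
  intro i k j l
  rw [hPT i k j l, hTval k l]
  ring

lemma psd_vecMulVec {d : Type*} [Fintype d] (v : d → ℂ) :
    (vecMulVec v (star v)).PosSemidef := by
  refine posSemidef_iff_dotProduct_mulVec.mpr ⟨?_, ?_⟩
  · ext p q
    simp only [conjTranspose_apply, vecMulVec_apply, Pi.star_apply, star_mul', star_star]
    ring
  · intro x
    have h : star x ⬝ᵥ (vecMulVec v (star v)) *ᵥ x
        = star (star v ⬝ᵥ x) * (star v ⬝ᵥ x) := by
      simp only [dotProduct, Matrix.mulVec, vecMulVec_apply, Pi.star_apply, star_sum,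
        star_mul', star_star, Finset.sum_mul_sum]
      refine Finset.sum_congr rfl fun p _ => ?_
      rw [Finset.mul_sum]
      refine Finset.sum_congr rfl fun q _ => ?_
      ring
    rw [h]
    exact star_mul_self_nonneg _

noncomputable def prodCoupling {d : Type*} (ψ φ : d → ℂ) : Matrix (d × d) (d × d) ℂ :=
  fun p q => φ p.1 * star (φ q.1) * ψ q.2 * star (ψ p.2)

lemma prodCoupling_psd {d : Type*} [Fintype d] (ψ φ : d → ℂ) :
    (prodCoupling ψ φ).PosSemidef := by
  have : prodCoupling ψ φ = vecMulVec (fun p => φ p.1 * star (ψ p.2))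
      (star (fun p => φ p.1 * star (ψ p.2))) := by
    ext p q
    simp only [prodCoupling, vecMulVec_apply, Pi.star_apply, star_mul', star_star]
    ring
  rw [this]
  exact psd_vecMulVec _

lemma prodCoupling_ptrace2 {d : Type*} [Fintype d] (ψ φ : d → ℂ) (hψ : star ψ ⬝ᵥ ψ = 1) :
    ptrace2 (prodCoupling ψ φ) = vecMulVec φ (star φ) := by
  ext i j
  simp only [ptrace2, prodCoupling, vecMulVec_apply, Pi.star_apply]
  have : ∑ k, φ i * star (φ j) * ψ k * star (ψ k) = φ i * star (φ j) * (star ψ ⬝ᵥ ψ) := by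
    rw [dotProduct, Finset.mul_sum]
    refine Finset.sum_congr rfl fun k _ => ?_
    simp only [Pi.star_apply]; ring
  rw [this, hψ, mul_one]

lemma prodCoupling_ptrace1 {d : Type*} [Fintype d] (ψ φ : d → ℂ) (hφ : star φ ⬝ᵥ φ = 1) :
    ptrace1 (prodCoupling ψ φ) = (vecMulVec ψ (star ψ))ᵀ := by
  ext i j
  simp only [ptrace1, prodCoupling, transpose_apply, vecMulVec_apply, Pi.star_apply]
  have : ∑ k, φ k * star (φ k) * ψ j * star (ψ i) = (star φ ⬝ᵥ φ) * (ψ j * star (ψ i)) := by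
    rw [dotProduct, Finset.sum_mul]
    refine Finset.sum_congr rfl fun k _ => ?_
    simp only [Pi.star_apply]; ring
  rw [this, hφ, one_mul]

lemma trace_formula {d : Type*} [Fintype d] [DecidableEq d]
    (ψ φ : d → ℂ) (hψ : star ψ ⬝ᵥ ψ = 1) (hφ : star φ ⬝ᵥ φ = 1)
    (a b : ℝ) (C : Matrix (d × d) (d × d) ℂ)
    (hC : C = ((a : ℂ)) • 1 - ((b : ℂ)) • vecProj (1 : Matrix d d ℂ))
    (P : Matrix (d × d) (d × d) ℂ)
    (hent : ∀ i k j l, P (i, k) (j, l) = φ i * star (φ j) * ψ l * star (ψ k)) :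
    (P * C).trace = ((a - b * ‖star ψ ⬝ᵥ φ‖ ^ 2 : ℝ) : ℂ) := by
  have htrP : P.trace = 1 := by
    rw [trace, Fintype.sum_prod_type]
    simp only [diag_apply]
    have : ∀ i : d, ∑ k, P (i, k) (i, k) = (φ i * star (φ i)) * (star ψ ⬝ᵥ ψ) := by
      intro i
      rw [dotProduct, Finset.mul_sum]
      refine Finset.sum_congr rfl fun k _ => ?_
      rw [hent]
      simp only [Pi.star_apply]; ring
    rw [Finset.sum_congr rfl fun i _ => this i, hψ]
    simp only [mul_one]
    have h2 : ∑ i, φ i * star (φ i) = star φ ⬝ᵥ φ := by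
      rw [dotProduct]
      exact Finset.sum_congr rfl fun i _ => by simp [Pi.star_apply, mul_comm]
    rw [h2, hφ]
  set s := star ψ ⬝ᵥ φ with hs
  have htrV : (P * vecProj (1 : Matrix d d ℂ)).trace = s * star s := by
    rw [trace]
    have hdiag : ∀ p : d × d, (P * vecProj (1 : Matrix d d ℂ)).diag p
        = (if p.1 = p.2 then (1 : ℂ) else 0) * ∑ j, P p (j, j) := by
      intro p
      simp only [diag_apply, Matrix.mul_apply, vecProj, vecify, Matrix.one_apply,
        Fintype.sum_prod_type, mul_ite, mul_one, mul_zero, ite_mul, zero_mul, one_mul,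
        apply_ite (star : ℂ → ℂ), star_one, star_zero, Finset.sum_ite_eq,
        Finset.sum_ite_eq', Finset.mem_univ, if_true, Finset.mul_sum]
      by_cases hp : p.1 = p.2 <;> simp [hp, Finset.mul_sum]
    rw [Finset.sum_congr rfl fun p _ => hdiag p]
    rw [Fintype.sum_prod_type]
    simp only [ite_mul, one_mul, zero_mul, Finset.sum_ite_eq, Finset.sum_ite_eq',
      Finset.mem_univ, if_true]
    have hcalc : ∀ i : d, ∑ j, P (i, i) (j, j) = (φ i * star (ψ i)) * star s := by
      intro i
      have hstars : star s = ∑ j, ψ j * star (φ j) := by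
        rw [hs, dotProduct, star_sum]
        refine Finset.sum_congr rfl fun j _ => ?_
        simp only [Pi.star_apply, star_mul', star_star]
      rw [hstars, Finset.mul_sum]
      refine Finset.sum_congr rfl fun j _ => ?_
      rw [hent]
      ring
    rw [Finset.sum_congr rfl fun i _ => hcalc i, ← Finset.sum_mul]
    have : ∑ i, φ i * star (ψ i) = s := by
      rw [hs, dotProduct]
      refine Finset.sum_congr rfl fun i _ => ?_
      simp only [Pi.star_apply]; ring
    rw [this]
  rw [hC, Matrix.mul_sub, Matrix.mul_smul, Matrix.mul_smul, Matrix.mul_one, trace_sub,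
    trace_smul, trace_smul, htrP, htrV]
  have hss : s * star s = ((‖s‖ ^ 2 : ℝ) : ℂ) := by
    have h1 : s * star s = (Complex.normSq s : ℂ) := Complex.mul_conj s
    rw [h1]
    norm_cast
    rw [← Complex.sq_norm]
  rw [hss]
  push_cast
  simp only [smul_eq_mul]
  ring

theorem wasserstein_distance_pure_states (n : ℕ) (hn : 1 ≤ n)
    (C : Matrix ((Fin n → Fin 2) × (Fin n → Fin 2)) ((Fin n → Fin 2) × (Fin n → Fin 2)) ℂ)
    (hC : C = ((2 : ℂ) ^ (2 * n + 1)) • 1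
        - ((2 : ℂ) ^ (n + 1)) • vecProj (1 : Matrix (Fin n → Fin 2) (Fin n → Fin 2) ℂ))
    (D2 : Matrix (Fin n → Fin 2) (Fin n → Fin 2) ℂ →
          Matrix (Fin n → Fin 2) (Fin n → Fin 2) ℂ → ℝ)
    (hD : ∀ ρ ω, D2 ρ ω = sInf {x : ℝ |
      ∃ Pmat : Matrix ((Fin n → Fin 2) × (Fin n → Fin 2)) ((Fin n → Fin 2) × (Fin n → Fin 2)) ℂ,
        Pmat.PosSemidef ∧ ptrace2 Pmat = ω ∧ ptrace1 Pmat = ρᵀ ∧ ((Pmat * C).trace).re = x})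
    (ψ φ : (Fin n → Fin 2) → ℂ) (hψ : star ψ ⬝ᵥ ψ = 1) (hφ : star φ ⬝ᵥ φ = 1)
    (ρ ω : Matrix (Fin n → Fin 2) (Fin n → Fin 2) ℂ)
    (hρ : ρ = vecMulVec ψ (star ψ)) (hω : ω = vecMulVec φ (star φ)) :
    D2 ρ ω = (2 : ℝ) ^ (2 * n + 1) - (2 : ℝ) ^ (n + 1) * ‖star ψ ⬝ᵥ φ‖ ^ 2 ∧
    D2 ρ ω ≤ (2 : ℝ) ^ (2 * n + 1) ∧
    (D2 ρ ω = (2 : ℝ) ^ (2 * n + 1) ↔ star ψ ⬝ᵥ φ = 0) ∧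
    D2 ρ ρ = (2 : ℝ) ^ (2 * n + 1) - (2 : ℝ) ^ (n + 1) ∧
    0 < D2 ρ ρ := by
  have hCk : C = (((2 : ℝ) ^ (2 * n + 1) : ℝ) : ℂ) • 1
      - (((2 : ℝ) ^ (n + 1) : ℝ) : ℂ) • vecProj (1 : Matrix (Fin n → Fin 2) (Fin n → Fin 2) ℂ) := by
    rw [hC]; norm_cast
  have key : ∀ (ψ' φ' : (Fin n → Fin 2) → ℂ), star ψ' ⬝ᵥ ψ' = 1 → star φ' ⬝ᵥ φ' = 1 →
      D2 (vecMulVec ψ' (star ψ')) (vecMulVec φ' (star φ'))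
        = (2 : ℝ) ^ (2 * n + 1) - (2 : ℝ) ^ (n + 1) * ‖star ψ' ⬝ᵥ φ'‖ ^ 2 := by
    intro ψ' φ' hψ' hφ'
    rw [hD]
    have hset : {x : ℝ | ∃ Pmat : Matrix ((Fin n → Fin 2) × (Fin n → Fin 2))
          ((Fin n → Fin 2) × (Fin n → Fin 2)) ℂ,
        Pmat.PosSemidef ∧ ptrace2 Pmat = vecMulVec φ' (star φ') ∧
          ptrace1 Pmat = (vecMulVec ψ' (star ψ'))ᵀ ∧ ((Pmat * C).trace).re = x}
        = {(2 : ℝ) ^ (2 * n + 1) - (2 : ℝ) ^ (n + 1) * ‖star ψ' ⬝ᵥ φ'‖ ^ 2} := by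
      ext x
      simp only [Set.mem_setOf_eq, Set.mem_singleton_iff]
      constructor
      · rintro ⟨P, hPSD, h2, h1, rfl⟩
        have hent := coupling_entries ψ' φ' hφ' P hPSD h2 h1
        rw [trace_formula ψ' φ' hψ' hφ' _ _ C hCk P hent]
        exact Complex.ofReal_re _
      · rintro rfl
        exact ⟨prodCoupling ψ' φ', prodCoupling_psd _ _, prodCoupling_ptrace2 _ _ hψ',
          prodCoupling_ptrace1 _ _ hφ', by
            rw [trace_formula ψ' φ' hψ' hφ' _ _ C hCk _ (fun i k j l => rfl)]
            exact Complex.ofReal_re _⟩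
    rw [hset, csInf_singleton]
  subst hρ hω
  have h1 := key ψ φ hψ hφ
  have h2 := key ψ ψ hψ hψ
  rw [hψ] at h2
  simp only [norm_one, one_pow, mul_one] at h2
  have hb : (0 : ℝ) < (2 : ℝ) ^ (n + 1) := by positivity
  refine ⟨h1, ?_, ?_, h2, ?_⟩
  · rw [h1]
    have : (0 : ℝ) ≤ (2 : ℝ) ^ (n + 1) * ‖star ψ ⬝ᵥ φ‖ ^ 2 := by positivity
    linarith
  · rw [h1]
    constructor
    · intro h
      have : (2 : ℝ) ^ (n + 1) * ‖star ψ ⬝ᵥ φ‖ ^ 2 = 0 := by linarith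
      have h0 : ‖star ψ ⬝ᵥ φ‖ ^ 2 = 0 := by
        rcases mul_eq_zero.mp this with h' | h'
        · exact absurd h' (ne_of_gt hb)
        · exact h'
      have := pow_eq_zero_iff (n := 2) (by norm_num) |>.mp h0
      exact norm_eq_zero.mp this
    · intro h
      rw [h]
      simp
  · rw [h2]
    have : (2 : ℝ) ^ (n + 1) < (2 : ℝ) ^ (2 * n + 1) := by
      apply pow_lt_pow_right₀ (by norm_num)
      omega
    linarith
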